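/- Let λ₀ ∈ ℂ with |λ₀| = 1, λ₀ ≠ −1, and λ₀³ ≠ 1, and define Φ on the 2×2 complex matrices by Φ([[a, b], [c, d]]) = [[(a+d)/2, λ₀ b], [conj(λ₀) c, (a+d)/2]]. Then λ₀ is an eigenvalue of Φ (i.e., Φ(X) = λ₀ X for some nonzero X), but λ₀² is not an eigenvalue of Φ; in particular, the set of unimodular eigenvalues of Φ, which equals {1, λ₀, conj(λ₀)}, is not closed under multiplication and hence is not a group. -/

import Mathlib

lemma key17 (l₀ lam : ℂ) (X : Matrix (Fin 2) (Fin 2) ℂ) (hX : X ≠ 0)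
    (h00 : (X 0 0 + X 1 1) / 2 = lam * X 0 0)
    (h01 : l₀ * X 0 1 = lam * X 0 1)
    (h10 : (starRingEnd ℂ) l₀ * X 1 0 = lam * X 1 0)
    (h11 : (X 0 0 + X 1 1) / 2 = lam * X 1 1) :
    lam = 0 ∨ lam = 1 ∨ lam = l₀ ∨ lam = (starRingEnd ℂ) l₀ := by
  by_cases hb : X 0 1 = 0
  · by_cases hc : X 1 0 = 0
    · by_cases hl : lam = 0
      · exact Or.inl hl
      · have had : X 0 0 = X 1 1 := by
          have := h00.symm.trans h11
          exact mul_left_cancel₀ hl this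
        have ha : X 0 0 ≠ 0 := by
          intro ha
          apply hX
          have hd : X 1 1 = 0 := had ▸ ha
          ext i j
          fin_cases i <;> fin_cases j <;> simp only [Matrix.zero_apply] <;> assumption
        right; left
        have h2 : X 0 0 = lam * X 0 0 := by linear_combination h00 + had / 2
        rcases mul_eq_zero.mp (show (1 - lam) * X 0 0 = 0 by linear_combination h2) with h | h
        · linear_combination -h
        · exact absurd h ha
    · right; right; right
      exact (mul_right_cancel₀ hc h10).symm
  · right; right; left
    exact (mul_right_cancel₀ hb h01).symm

theorem stmt_17 (l₀ : ℂ) (hl₀ : ‖l₀‖ = 1) (hl₀2 : l₀ ≠ -1) (hl₀3 : l₀ ^ 3 ≠ 1)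
    (Φ : Matrix (Fin 2) (Fin 2) ℂ → Matrix (Fin 2) (Fin 2) ℂ)
    (hΦ : ∀ X, Φ X = !![(X 0 0 + X 1 1) / 2, l₀ * X 0 1;
                        (starRingEnd ℂ) l₀ * X 1 0, (X 0 0 + X 1 1) / 2]) :
    (∃ X, X ≠ 0 ∧ Φ X = l₀ • X) ∧
    (¬ ∃ X, X ≠ 0 ∧ Φ X = (l₀ ^ 2) • X) ∧
    {l : ℂ | ‖l‖ = 1 ∧ ∃ X, X ≠ 0 ∧ Φ X = l • X} = {1, l₀, (starRingEnd ℂ) l₀} ∧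
    ¬ (∀ μ ∈ {l : ℂ | ‖l‖ = 1 ∧ ∃ X, X ≠ 0 ∧ Φ X = l • X},
       ∀ ν ∈ {l : ℂ | ‖l‖ = 1 ∧ ∃ X, X ≠ 0 ∧ Φ X = l • X},
         μ * ν ∈ {l : ℂ | ‖l‖ = 1 ∧ ∃ X, X ≠ 0 ∧ Φ X = l • X}) := by
  have hl0 : l₀ ≠ 0 := by intro h; rw [h] at hl₀; simp at hl₀
  have hl1 : l₀ ≠ 1 := by intro h; rw [h] at hl₀3; simp at hl₀3
  have hconj : l₀ * (starRingEnd ℂ) l₀ = 1 := by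
    rw [Complex.mul_conj]
    norm_cast
    rw [Complex.normSq_eq_norm_sq]
    simp [hl₀]
  -- helper: extract entrywise equations from Φ X = lam • X
  have extract : ∀ (lam : ℂ) (X : Matrix (Fin 2) (Fin 2) ℂ), Φ X = lam • X →
      ((X 0 0 + X 1 1) / 2 = lam * X 0 0 ∧ l₀ * X 0 1 = lam * X 0 1 ∧
       (starRingEnd ℂ) l₀ * X 1 0 = lam * X 1 0 ∧ (X 0 0 + X 1 1) / 2 = lam * X 1 1) := by
    intro lam X h
    rw [hΦ] at h
    refine ⟨?_, ?_, ?_, ?_⟩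
    · have := congrFun (congrFun h 0) 0; simpa using this
    · have := congrFun (congrFun h 0) 1; simpa using this
    · have := congrFun (congrFun h 1) 0; simpa using this
    · have := congrFun (congrFun h 1) 1; simpa using this
  have eigL : ∃ X, X ≠ 0 ∧ Φ X = l₀ • X := by
    refine ⟨!![0, 1; 0, 0], ?_, ?_⟩
    · intro h
      have := congrFun (congrFun h 0) 1
      simp at this
    · rw [hΦ]
      ext i j
      fin_cases i <;> fin_cases j <;> simp
  have eigC : ∃ X, X ≠ 0 ∧ Φ X = (starRingEnd ℂ) l₀ • X := by
    refine ⟨!![0, 0; 1, 0], ?_, ?_⟩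
    · intro h
      have := congrFun (congrFun h 1) 0
      simp at this
    · rw [hΦ]
      ext i j
      fin_cases i <;> fin_cases j <;> simp
  have eig1 : ∃ X, X ≠ 0 ∧ Φ X = (1 : ℂ) • X := by
    refine ⟨!![1, 0; 0, 1], ?_, ?_⟩
    · intro h
      have := congrFun (congrFun h 0) 0
      simp at this
    · rw [hΦ]
      ext i j
      fin_cases i <;> fin_cases j <;> norm_num
  have noteig2 : ¬ ∃ X, X ≠ 0 ∧ Φ X = (l₀ ^ 2) • X := by
    rintro ⟨X, hX, h⟩
    obtain ⟨h00, h01, h10, h11⟩ := extract _ _ h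
    rcases key17 l₀ (l₀ ^ 2) X hX h00 h01 h10 h11 with h | h | h | h
    · exact hl0 (pow_eq_zero_iff (by norm_num) |>.mp h)
    · have : (l₀ - 1) * (l₀ + 1) = 0 := by ring_nf; linear_combination h
      rcases mul_eq_zero.mp this with h' | h'
      · exact hl1 (by linear_combination h')
      · exact hl₀2 (by linear_combination h')
    · have : l₀ * (l₀ - 1) = 0 := by ring_nf; linear_combination h
      rcases mul_eq_zero.mp this with h' | h'
      · exact hl0 h'
      · exact hl1 (by linear_combination h')
    · apply hl₀3
      have : l₀ ^ 3 = l₀ * (l₀ ^ 2) := by ring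
      rw [this, h, hconj]
  have hset : {l : ℂ | ‖l‖ = 1 ∧ ∃ X, X ≠ 0 ∧ Φ X = l • X} = {1, l₀, (starRingEnd ℂ) l₀} := by
    ext lam
    simp only [Set.mem_setOf_eq, Set.mem_insert_iff, Set.mem_singleton_iff]
    constructor
    · rintro ⟨hn, X, hX, h⟩
      obtain ⟨h00, h01, h10, h11⟩ := extract _ _ h
      rcases key17 l₀ lam X hX h00 h01 h10 h11 with h | h | h | h
      · rw [h] at hn; simp at hn
      · exact Or.inl h
      · exact Or.inr (Or.inl h)
      · exact Or.inr (Or.inr h)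
    · rintro (rfl | rfl | rfl)
      · exact ⟨by simp, eig1⟩
      · exact ⟨hl₀, eigL⟩
      · exact ⟨by simpa using hl₀, eigC⟩
  refine ⟨eigL, noteig2, hset, ?_⟩
  intro hall
  have hmem : l₀ ∈ {l : ℂ | ‖l‖ = 1 ∧ ∃ X, X ≠ 0 ∧ Φ X = l • X} := ⟨hl₀, eigL⟩
  have := hall l₀ hmem l₀ hmem
  rw [Set.mem_setOf_eq] at this
  exact noteig2 (by rw [← sq] at this; exact this.2)
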